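/- arXiv:1012.3687 — 5 statements merged into one kernel-verified Lean document; each statement's English description precedes it below -/
import Mathlib

section
/- In K[[T]]: ∏_{i=1}^m (q − q^{−1}A_i T)·(1 − A_i T)^{−1} = q^m + (q − q^{−1}) ∑_{r≥1} ( ∑_{i=1}^m A_i^r ∏_{j≠i} (qA_i − q^{−1}A_j)/(A_i − A_j) ) T^r. -/
open Polynomial Finset

private lemma key_poly {K : Type*} [Field K] (m : ℕ) (q : K) (hq : q ≠ 0)
    (A : Fin m → K) (hA : Function.Injective A) (B : Fin m → K)
    (hB : ∀ i, B i = (q - q⁻¹) * ∏ j ∈ Finset.univ.erase i,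
      (q * A i - q⁻¹ * A j) / (A i - A j)) :
    (∏ i : Fin m, (Polynomial.C q - Polynomial.C (q⁻¹ * A i) * Polynomial.X)) =
      Polynomial.C (q ^ m - ∑ i : Fin m, B i) *
        ∏ j : Fin m, (1 - Polynomial.C (A j) * Polynomial.X) +
      ∑ i : Fin m, Polynomial.C (B i) *
        ∏ j ∈ Finset.univ.erase i, (1 - Polynomial.C (A j) * Polynomial.X) := by
  classical
  rw [← sub_eq_zero]
  set m' : ℕ := #(Finset.univ.filter (fun i : Fin m => A i ≠ 0)) with hm'
  set s : Finset K :=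
    insert (0 : K) ((Finset.univ.filter (fun i : Fin m => A i ≠ 0)).image (fun i => (A i)⁻¹))
    with hs
  have hcard : #s = m' + 1 := by
    rw [hs, Finset.card_insert_of_notMem, Finset.card_image_of_injOn]
    · intro i hi j hj hij
      simp only [Finset.mem_coe, Finset.mem_filter] at hi hj
      exact hA (inv_injective hij)
    · simp only [Finset.mem_image, Finset.mem_filter, not_exists]
      rintro i ⟨⟨-, hi⟩, h0⟩
      exact hi (inv_eq_zero.mp h0)
  -- degree bounds
  have hprodle : ∀ (t : Finset (Fin m)) (f : Fin m → Polynomial K),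
      (∀ i ∈ t, (f i).natDegree ≤ if A i ≠ 0 then 1 else 0) →
      (∏ i ∈ t, f i).natDegree ≤ m' := by
    intro t f hf
    refine (Polynomial.natDegree_prod_le t f).trans ?_
    calc ∑ i ∈ t, (f i).natDegree ≤ ∑ i ∈ t, (if A i ≠ 0 then 1 else 0) :=
          Finset.sum_le_sum hf
      _ = #(t.filter (fun i => A i ≠ 0)) := by rw [Finset.sum_boole]; simp
      _ ≤ m' := Finset.card_le_card (Finset.filter_subset_filter _ (Finset.subset_univ t))
  have hfac : ∀ a b : K, (Polynomial.C b - Polynomial.C a * Polynomial.X).natDegree ≤ 1 :=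
    fun a b => (Polynomial.natDegree_sub_le _ _).trans (by
      simp only [max_le_iff, Polynomial.natDegree_C, Nat.zero_le, true_and]
      exact (Polynomial.natDegree_C_mul_le a Polynomial.X).trans Polynomial.natDegree_X_le)
  have hfacP : ∀ i : Fin m,
      (Polynomial.C q - Polynomial.C (q⁻¹ * A i) * Polynomial.X).natDegree ≤
        if A i ≠ 0 then 1 else 0 := by
    intro i
    by_cases h : A i = 0
    · simp [h]
    · simpa [h] using hfac (q⁻¹ * A i) q
  have hfacQ : ∀ i : Fin m,
      ((1 : Polynomial K) - Polynomial.C (A i) * Polynomial.X).natDegree ≤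
        if A i ≠ 0 then 1 else 0 := by
    intro i
    by_cases h : A i = 0
    · simp [h]
    · rw [if_pos h, ← Polynomial.C_1]
      exact hfac (A i) 1
  apply Polynomial.eq_zero_of_natDegree_lt_card_of_eval_eq_zero' _ s
  · -- evaluations
    intro x hx
    rw [Polynomial.eval_sub, sub_eq_zero]
    simp only [hs, Finset.mem_insert, Finset.mem_image, Finset.mem_filter] at hx
    rcases hx with rfl | ⟨i, ⟨-, hi0⟩, rfl⟩
    · simp [Polynomial.eval_prod, Polynomial.eval_finset_sum]
    · have hzero : ∀ t : Finset (Fin m), i ∈ t →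
          Polynomial.eval (A i)⁻¹ (∏ j ∈ t, (1 - Polynomial.C (A j) * Polynomial.X)) = 0 := by
        intro t hit
        rw [Polynomial.eval_prod]
        refine Finset.prod_eq_zero hit ?_
        simp [mul_inv_cancel₀ hi0]
      rw [Polynomial.eval_add, Polynomial.eval_mul, hzero Finset.univ (Finset.mem_univ i),
        mul_zero, zero_add, Polynomial.eval_finset_sum]
      rw [Finset.sum_eq_single i]
      · rw [Polynomial.eval_mul, Polynomial.eval_C, Polynomial.eval_prod, hB,
          Polynomial.eval_prod, ← Finset.mul_prod_erase _ _ (Finset.mem_univ i)]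
        have h1 : Polynomial.eval (A i)⁻¹ (Polynomial.C q - Polynomial.C (q⁻¹ * A i) * Polynomial.X)
            = q - q⁻¹ := by
          simp [mul_assoc, mul_inv_cancel₀ hi0]
        rw [h1, mul_assoc, ← Finset.prod_mul_distrib]
        congr 1
        refine Finset.prod_congr rfl fun j hj => ?_
        have hji : j ≠ i := Finset.ne_of_mem_erase hj
        have hAij : A i - A j ≠ 0 := sub_ne_zero.mpr fun h => hji (hA h.symm)
        simp only [Polynomial.eval_sub, Polynomial.eval_mul, Polynomial.eval_C,
          Polynomial.eval_X, Polynomial.eval_one]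
        field_simp
      · intro j hj hji
        rw [Polynomial.eval_mul, hzero _ (Finset.mem_erase.mpr ⟨hji.symm, Finset.mem_univ i⟩),
          mul_zero]
      · simp
  · -- degree
    rw [hcard, Nat.lt_succ_iff]
    refine (Polynomial.natDegree_sub_le _ _).trans (max_le ?_ ?_)
    · exact hprodle Finset.univ _ (fun i _ => hfacP i)
    · refine (Polynomial.natDegree_add_le _ _).trans (max_le ?_ ?_)
      · exact (Polynomial.natDegree_C_mul_le _ _).trans
          (hprodle Finset.univ _ (fun i _ => hfacQ i))
      · refine Polynomial.natDegree_sum_le_of_forall_le _ _ fun i _ => ?_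
        exact (Polynomial.natDegree_C_mul_le _ _).trans
          (hprodle _ _ (fun j _ => hfacQ j))

private lemma geom_inv {K : Type*} [Field K] (a : K) :
    (1 - PowerSeries.C (R := K) a * PowerSeries.X)⁻¹ = PowerSeries.mk (fun n => a ^ n) := by
  have hc : PowerSeries.constantCoeff (R := K) (1 - PowerSeries.C (R := K) a * PowerSeries.X) ≠ 0 := by simp
  rw [PowerSeries.inv_eq_iff_mul_eq_one hc]
  ext n
  rw [mul_sub, mul_one]
  cases n with
  | zero => simp
  | succ n =>
    rw [show PowerSeries.mk (fun n => a ^ n) * (PowerSeries.C (R := K) a * PowerSeries.X)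
      = PowerSeries.C (R := K) a * (PowerSeries.X * PowerSeries.mk fun n => a ^ n) by ring]
    simp [PowerSeries.coeff_succ_X_mul, pow_succ, mul_comm]

/-- **Partial fraction expansion in `K[[T]]`.**
For a field `K`, `q ≠ 0` and pairwise distinct `A₁, …, A_m`, one has
`∏ᵢ (q − q⁻¹Aᵢ T)(1 − Aᵢ T)⁻¹
  = qᵐ + (q − q⁻¹) ∑_{r≥1} (∑ᵢ Aᵢʳ ∏_{j≠i} (qAᵢ − q⁻¹Aⱼ)/(Aᵢ − Aⱼ)) Tʳ`. -/
theorem statement1 {K : Type*} [Field K] (m : ℕ) (hm : 1 ≤ m)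
    (q : K) (hq : q ≠ 0) (A : Fin m → K) (hA : Function.Injective A) :
    (∏ i : Fin m,
      ((PowerSeries.C (R := K) q - PowerSeries.C (R := K) (q⁻¹ * A i) * PowerSeries.X) *
        (1 - PowerSeries.C (R := K) (A i) * PowerSeries.X)⁻¹)) =
    PowerSeries.mk (fun r => if r = 0 then q ^ m else
      (q - q⁻¹) * ∑ i : Fin m, A i ^ r *
        ∏ j ∈ Finset.univ.erase i, (q * A i - q⁻¹ * A j) / (A i - A j)) := by
  classical
  set B : Fin m → K := fun i => (q - q⁻¹) * ∏ j ∈ Finset.univ.erase i,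
      (q * A i - q⁻¹ * A j) / (A i - A j) with hBdef
  have hB : ∀ i, B i = (q - q⁻¹) * ∏ j ∈ Finset.univ.erase i,
      (q * A i - q⁻¹ * A j) / (A i - A j) := fun i => rfl
  -- coerce the polynomial identity to power series
  have keyPS : (∏ i : Fin m,
        (PowerSeries.C (R := K) q - PowerSeries.C (R := K) (q⁻¹ * A i) * PowerSeries.X)) =
      PowerSeries.C (R := K) (q ^ m - ∑ i : Fin m, B i) *
        ∏ j : Fin m, (1 - PowerSeries.C (R := K) (A j) * PowerSeries.X) +
      ∑ i : Fin m, PowerSeries.C (R := K) (B i) *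
        ∏ j ∈ Finset.univ.erase i, (1 - PowerSeries.C (R := K) (A j) * PowerSeries.X) := by
    have h := congrArg (Polynomial.coeToPowerSeries.ringHom (R := K))
      (key_poly m q hq A hA B hB)
    simpa only [map_prod, map_sum, map_add, map_mul, map_sub, map_one,
      Polynomial.coeToPowerSeries.ringHom_apply, Polynomial.coe_C, Polynomial.coe_X] using h
  -- decompose the RHS power series
  have hRdecomp : PowerSeries.mk (fun r => if r = 0 then q ^ m else
      (q - q⁻¹) * ∑ i : Fin m, A i ^ r *
        ∏ j ∈ Finset.univ.erase i, (q * A i - q⁻¹ * A j) / (A i - A j)) =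
      PowerSeries.C (R := K) (q ^ m - ∑ i : Fin m, B i) +
        ∑ i : Fin m, PowerSeries.C (R := K) (B i) * PowerSeries.mk (fun n => A i ^ n) := by
    ext n
    simp only [map_add, map_sum, PowerSeries.coeff_mk, PowerSeries.coeff_C_mul,
      PowerSeries.coeff_C]
    cases n with
    | zero => simp [hB]
    | succ n =>
      simp only [Nat.succ_ne_zero, if_false, zero_add, hB, Finset.mul_sum]
      refine Finset.sum_congr rfl fun i _ => by ring
  have hcc : ∀ a : K, PowerSeries.constantCoeff (R := K) (1 - PowerSeries.C (R := K) a * PowerSeries.X) ≠ 0 :=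
    fun a => by simp
  have hprodne : (∏ j : Fin m, (1 - PowerSeries.C (R := K) (A j) * PowerSeries.X)) ≠ 0 :=
    Finset.prod_ne_zero_iff.mpr fun j _ h => hcc (A j) (by rw [h]; simp)
  apply mul_right_cancel₀ hprodne
  rw [hRdecomp, add_mul, Finset.sum_mul]
  have hL : (∏ i : Fin m,
        ((PowerSeries.C (R := K) q - PowerSeries.C (R := K) (q⁻¹ * A i) * PowerSeries.X) *
          (1 - PowerSeries.C (R := K) (A i) * PowerSeries.X)⁻¹)) *
      (∏ j : Fin m, (1 - PowerSeries.C (R := K) (A j) * PowerSeries.X)) =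
      ∏ i : Fin m, (PowerSeries.C (R := K) q - PowerSeries.C (R := K) (q⁻¹ * A i) * PowerSeries.X) := by
    rw [Finset.prod_mul_distrib, mul_assoc, ← Finset.prod_mul_distrib]
    have : ∀ i : Fin m, (1 - PowerSeries.C (R := K) (A i) * PowerSeries.X)⁻¹ *
        (1 - PowerSeries.C (R := K) (A i) * PowerSeries.X) = 1 :=
      fun i => PowerSeries.inv_mul_cancel _ (hcc (A i))
    simp only [this, Finset.prod_const_one, mul_one]
  rw [hL, keyPS]
  congr 1
  refine Finset.sum_congr rfl fun i _ => ?_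
  rw [← Finset.mul_prod_erase _ _ (Finset.mem_univ i), mul_assoc,
    ← mul_assoc (PowerSeries.mk fun n => A i ^ n), ← geom_inv,
    PowerSeries.inv_mul_cancel _ (hcc (A i)), one_mul]
end

section
/- In ℚ[[u, v, c]]: exp( G(v − u + c) − G(v − u − c) ) · P(u, v + c) = P(v, u + c). -/
noncomputable section

open MvPowerSeries

/-- The exponential `exp(a·u + b·v + c·w) ∈ ℚ[[u,v,w]]` of a linear form:
its coefficient at `u^{d₀} v^{d₁} w^{d₂}` is `a^{d₀} b^{d₁} c^{d₂}/(d₀! d₁! d₂!)`. -/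
def expLin3 (a b c : ℚ) : MvPowerSeries (Fin 3) ℚ :=
  fun d => (a ^ (d 0) / (d 0).factorial) * (b ^ (d 1) / (d 1).factorial) *
    (c ^ (d 2) / (d 2).factorial)

lemma sum1 (a a' : ℚ) (n : ℕ) :
    ∑ p ∈ Finset.HasAntidiagonal.antidiagonal n, (a ^ p.1 / p.1.factorial) * (a' ^ p.2 / p.2.factorial)
      = (a + a') ^ n / n.factorial := by
  rw [add_pow, Finset.sum_div, Finset.Nat.sum_antidiagonal_eq_sum_range_succ_mk]
  refine Finset.sum_congr rfl fun i hi => ?_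
  simp only [Finset.mem_range, Nat.lt_succ_iff] at hi
  have h := Nat.choose_mul_factorial_mul_factorial hi
  have h1 : (i.factorial : ℚ) ≠ 0 := Nat.cast_ne_zero.2 i.factorial_ne_zero
  have h2 : ((n - i).factorial : ℚ) ≠ 0 := Nat.cast_ne_zero.2 (n - i).factorial_ne_zero
  have h3 : (n.factorial : ℚ) ≠ 0 := Nat.cast_ne_zero.2 n.factorial_ne_zero
  field_simp
  rw [← h]
  push_cast
  ring

lemma expLin3_mul (a b c a' b' c' : ℚ) :
    expLin3 a b c * expLin3 a' b' c' = expLin3 (a + a') (b + b') (c + c') := by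
  ext d
  rw [coeff_mul]
  have hR : coeff d (expLin3 (a + a') (b + b') (c + c'))
      = ∑ q ∈ Finset.HasAntidiagonal.antidiagonal (d 0) ×ˢ (Finset.HasAntidiagonal.antidiagonal (d 1) ×ˢ Finset.HasAntidiagonal.antidiagonal (d 2)),
          (a ^ q.1.1 / q.1.1.factorial * (a' ^ q.1.2 / q.1.2.factorial)) *
          ((b ^ q.2.1.1 / q.2.1.1.factorial * (b' ^ q.2.1.2 / q.2.1.2.factorial)) *
           (c ^ q.2.2.1 / q.2.2.1.factorial * (c' ^ q.2.2.2 / q.2.2.2.factorial))) := by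
    have : coeff d (expLin3 (a + a') (b + b') (c + c'))
        = ((a+a') ^ (d 0) / (d 0).factorial) * (((b+b') ^ (d 1) / (d 1).factorial) *
          ((c+c') ^ (d 2) / (d 2).factorial)) := by
      rw [show coeff d (expLin3 (a + a') (b + b') (c + c'))
          = ((a+a') ^ (d 0) / (d 0).factorial) * ((b+b') ^ (d 1) / (d 1).factorial) *
            ((c+c') ^ (d 2) / (d 2).factorial) from rfl, mul_assoc]
    rw [this, ← sum1 a a', ← sum1 b b', ← sum1 c c',
      Finset.sum_mul_sum (Finset.HasAntidiagonal.antidiagonal (d 1)) (Finset.HasAntidiagonal.antidiagonal (d 2)),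
      Finset.sum_mul_sum (Finset.HasAntidiagonal.antidiagonal (d 0))]
    simp only [Finset.sum_product, Finset.mul_sum]
  rw [hR]
  refine Finset.sum_nbij'
    (fun p => ((p.1 0, p.2 0), ((p.1 1, p.2 1), (p.1 2, p.2 2))))
    (fun q => (Finsupp.equivFunOnFinite.symm ![q.1.1, q.2.1.1, q.2.2.1],
               Finsupp.equivFunOnFinite.symm ![q.1.2, q.2.1.2, q.2.2.2]))
    ?_ ?_ ?_ ?_ ?_
  · intro p hp
    rw [Finset.HasAntidiagonal.mem_antidiagonal] at hp
    simp only [Finset.mem_product, Finset.HasAntidiagonal.mem_antidiagonal]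
    refine ⟨?_, ?_, ?_⟩ <;> simpa using DFunLike.congr_fun hp _
  · intro q hq
    simp only [Finset.mem_product, Finset.HasAntidiagonal.mem_antidiagonal] at hq
    rw [Finset.HasAntidiagonal.mem_antidiagonal]
    ext i
    fin_cases i <;>
      simp [hq.1, hq.2.1, hq.2.2]
  · intro p hp
    refine Prod.ext ?_ ?_ <;> · ext i; fin_cases i <;> rfl
  · intro q hq
    rfl
  · intro p hp
    rw [show coeff p.1 (expLin3 a b c) = (a ^ (p.1 0) / (p.1 0).factorial) *
        (b ^ (p.1 1) / (p.1 1).factorial) * (c ^ (p.1 2) / (p.1 2).factorial) from rfl,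
      show coeff p.2 (expLin3 a' b' c') = (a' ^ (p.2 0) / (p.2 0).factorial) *
        (b' ^ (p.2 1) / (p.2 1).factorial) * (c' ^ (p.2 2) / (p.2 2).factorial) from rfl]
    ring

lemma coeff_expLin3 (a b c : ℚ) (d : Fin 3 →₀ ℕ) :
    coeff d (expLin3 a b c) = a ^ (d 0) / (d 0).factorial *
      (b ^ (d 1) / (d 1).factorial) * (c ^ (d 2) / (d 2).factorial) := rfl

/-- In `ℚ[[u, v, c]]` one has
`exp(G(v − u + c) − G(v − u − c)) · P(u, v + c) = P(v, u + c)`,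
where `(x − y)·P(x,y) = eˣ − e^y` and `G(w) = log(w/(e^{w/2} − e^{−w/2}))`.

The three substituted series are pinned down by their unique algebraic characterisations
(`ℚ[[u,v,c]]` is an integral domain, so each of the equations below has at most one
solution):
* `P₁ = P(u, v+c)` satisfies `(u − v − c)·P₁ = e^u − e^{v+c}`;
* `P₂ = P(v, u+c)` satisfies `(v − u − c)·P₂ = e^v − e^{u+c}`;
* `Egg = exp(G(v−u+c) − G(v−u−c))` satisfies, by the functional equation
  `exp(G(w))·(e^{w/2} − e^{−w/2}) = w`,
  `Egg · (e^{(v−u+c)/2} − e^{−(v−u+c)/2}) · (v − u − c)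
       = (v − u + c) · (e^{(v−u−c)/2} − e^{−(v−u−c)/2})`.

Here the variables are `u = X 0`, `v = X 1`, `c = X 2`. -/
theorem statement6
    (P₁ P₂ Egg : MvPowerSeries (Fin 3) ℚ)
    (hP₁ : (X 0 - X 1 - X 2) * P₁ = expLin3 1 0 0 - expLin3 0 1 1)
    (hP₂ : (X 1 - X 0 - X 2) * P₂ = expLin3 0 1 0 - expLin3 1 0 1)
    (hEgg : Egg * (expLin3 (-(1/2)) (1/2) (1/2) - expLin3 (1/2) (-(1/2)) (-(1/2)))
        * (X 1 - X 0 - X 2)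
      = (X 1 - X 0 + X 2) *
        (expLin3 (-(1/2)) (1/2) (-(1/2)) - expLin3 (1/2) (-(1/2)) (1/2))) :
    Egg * P₁ = P₂ := by
  have h1 : expLin3 (-(1/2)) (1/2) (1/2) - expLin3 (1/2) (-(1/2)) (-(1/2))
      ≠ (0 : MvPowerSeries (Fin 3) ℚ) := by
    intro h
    have h' := congrArg (coeff (Finsupp.single 1 1)) h
    simp only [map_sub, coeff_expLin3, Finsupp.single_apply, map_zero] at h'
    norm_num [show (1:Fin 3) ≠ 2 from by decide] at h'
  have h2 : (X 1 - X 0 - X 2 : MvPowerSeries (Fin 3) ℚ) ≠ 0 := by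
    intro h
    have hc : coeff (Finsupp.single 1 1) (X 1 - X 0 - X 2 : MvPowerSeries (Fin 3) ℚ) = 1 := by
      simp only [map_sub, MvPowerSeries.X, coeff_monomial]
      norm_num [Finsupp.single_eq_single_iff]
      decide
    rw [h, map_zero] at hc
    exact one_ne_zero hc.symm
  have key : (expLin3 (-(1/2)) (1/2) (-(1/2)) - expLin3 (1/2) (-(1/2)) (1/2)) *
        (expLin3 0 1 1 - expLin3 1 0 0)
      = (expLin3 (-(1/2)) (1/2) (1/2) - expLin3 (1/2) (-(1/2)) (-(1/2))) *
        (expLin3 0 1 0 - expLin3 1 0 1) := by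
    simp only [sub_mul, mul_sub, expLin3_mul]
    norm_num
    ring
  refine mul_right_cancel₀ (mul_ne_zero h1 h2) ?_
  linear_combination P₁ * hEgg
    - (expLin3 (-(1/2)) (1/2) (-(1/2)) - expLin3 (1/2) (-(1/2)) (1/2)) * hP₁
    - (expLin3 (-(1/2)) (1/2) (1/2) - expLin3 (1/2) (-(1/2)) (-(1/2))) * hP₂
    + key

end
end

section
/- For every integer n ≥ 1: ℏ𝒰 ∩ 𝒥^n = ℏ · 𝒥^{n−1}. -/
open Pointwise

noncomputable section

variable {U : Type*} [Ring U] [Algebra ℂ U]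

/-- The two-sided ideal `𝒥 = {f ∈ U[[ℏ]] : f(0) ∈ J}` (as an additive submonoid). -/
def Jhat (J : AddSubmonoid U) : AddSubmonoid (PowerSeries U) :=
  J.comap (PowerSeries.constantCoeff : PowerSeries U →+* U).toAddMonoidHom

/-- Powers of `𝒥`, with the convention `𝒥⁰ = 𝒰` (everything); `𝒥ⁿ⁺¹ = 𝒥·𝒥ⁿ` is the
additive submonoid generated by products, i.e. finite sums of products of `n + 1`
elements of `𝒥`. -/
def Jpow (J : AddSubmonoid U) : ℕ → AddSubmonoid (PowerSeries U)
  | 0 => ⊤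
  | n + 1 => Jhat J * Jpow J n

/-- The shift operator: drop the constant coefficient and divide by `X`. -/
def pshift (f : PowerSeries U) : PowerSeries U :=
  PowerSeries.mk fun p => PowerSeries.coeff (p + 1) f

lemma pshift_eq (f : PowerSeries U) :
    f = PowerSeries.X * pshift f + PowerSeries.C (PowerSeries.constantCoeff f) :=
  PowerSeries.eq_X_mul_shift_add_const f

lemma pshift_add (f g : PowerSeries U) : pshift (f + g) = pshift f + pshift g := by
  ext p
  simp [pshift]

lemma pshift_X_mul_add_C (h : PowerSeries U) (c : U) :
    pshift (PowerSeries.X * h + PowerSeries.C c) = h := by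
  ext p
  simp [pshift, PowerSeries.coeff_succ_X_mul, PowerSeries.coeff_C]

lemma pshift_mul (a b : PowerSeries U) :
    pshift (a * b) = PowerSeries.C (PowerSeries.constantCoeff a) * pshift b
      + pshift a * b := by
  have ha := pshift_eq a
  set a' := pshift a
  set b' := pshift b
  set a0 := PowerSeries.constantCoeff a
  set b0 := PowerSeries.constantCoeff b
  have hb := pshift_eq b
  have key : a * b = PowerSeries.X * (PowerSeries.C a0 * b' + a' * b)
      + PowerSeries.C (a0 * PowerSeries.constantCoeff b) := by
    calc a * b = (PowerSeries.X * a' + PowerSeries.C a0) * b := by rw [← ha]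
      _ = PowerSeries.X * (a' * b) + PowerSeries.C a0 *
            (PowerSeries.X * b' + PowerSeries.C b0) := by
          rw [← hb, add_mul, mul_assoc]
      _ = PowerSeries.X * (PowerSeries.C a0 * b' + a' * b)
            + PowerSeries.C (a0 * b0) := by
          rw [map_mul, mul_add, ← mul_assoc (PowerSeries.C a0) PowerSeries.X b',
            (PowerSeries.commute_X (PowerSeries.C a0)).eq,
            mul_assoc PowerSeries.X, mul_add]
          abel
  rw [key, pshift_X_mul_add_C, add_comm]

lemma Jhat_mul_absorb (J : AddSubmonoid U)
    (hJl : ∀ (u : U) (a : U), a ∈ J → u * a ∈ J)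
    (u a : PowerSeries U) (ha : a ∈ Jhat J) : u * a ∈ Jhat J := by
  simp only [Jhat, AddSubmonoid.mem_comap, RingHom.toAddMonoidHom_eq_coe,
    AddMonoidHom.coe_coe, map_mul] at ha ⊢
  exact hJl _ _ ha

lemma Jpow_mul_absorb (J : AddSubmonoid U)
    (hJl : ∀ (u : U) (a : U), a ∈ J → u * a ∈ J)
    (n : ℕ) (u f : PowerSeries U) (hf : f ∈ Jpow J (n + 1)) :
    u * f ∈ Jpow J (n + 1) := by
  refine AddSubmonoid.mul_induction_on hf (fun a ha b hb => ?_) (fun x y hx hy => ?_)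
  · rw [← mul_assoc]
    exact AddSubmonoid.mul_mem_mul (Jhat_mul_absorb J hJl u a ha) hb
  · rw [mul_add]; exact add_mem hx hy

lemma pshift_Jpow (J : AddSubmonoid U)
    (hJl : ∀ (u : U) (a : U), a ∈ J → u * a ∈ J) :
    ∀ n : ℕ, ∀ f ∈ Jpow J (n + 1), pshift f ∈ Jpow J n := by
  intro n
  induction n with
  | zero => intro f _; exact AddSubmonoid.mem_top _
  | succ m ih =>
    intro f hf
    refine AddSubmonoid.mul_induction_on hf (fun a ha b hb => ?_) (fun x y hx hy => ?_)
    · rw [pshift_mul]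
      refine add_mem ?_ ?_
      · refine AddSubmonoid.mul_mem_mul ?_ (ih b hb)
        simpa [Jhat, AddSubmonoid.mem_comap] using ha
      · exact Jpow_mul_absorb J hJl m (pshift a) b hb
    · rw [pshift_add]; exact add_mem hx hy

/-- Let `U` be a unital associative `ℂ`-algebra, `J ⊆ U` a two-sided
ideal, `𝒰 = U[[ℏ]]` and `𝒥 = {f : f(0) ∈ J}`.  Then for every `n ≥ 1`,
`ℏ𝒰 ∩ 𝒥ⁿ = ℏ·𝒥ⁿ⁻¹`.  (Note `ℏ𝒰 = {f : f(0) = 0}`, and `ℏ = PowerSeries.X` is central.) -/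
theorem statement8 (J : AddSubmonoid U)
    (hJl : ∀ (u : U) (a : U), a ∈ J → u * a ∈ J)
    (hJr : ∀ (a : U), a ∈ J → ∀ u : U, a * u ∈ J)
    (n : ℕ) (hn : 1 ≤ n) (f : PowerSeries U) :
    (PowerSeries.constantCoeff f = 0 ∧ f ∈ Jpow J n) ↔
      ∃ g ∈ Jpow J (n - 1), f = PowerSeries.X * g := by
  obtain ⟨m, rfl⟩ : ∃ m, n = m + 1 := ⟨n - 1, (Nat.succ_pred_eq_of_pos hn).symm⟩
  simp only [Nat.add_sub_cancel]
  constructor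
  · rintro ⟨h0, hf⟩
    refine ⟨pshift f, pshift_Jpow J hJl m f hf, ?_⟩
    conv_lhs => rw [pshift_eq f]
    rw [h0, map_zero, add_zero]
  · rintro ⟨g, hg, rfl⟩
    refine ⟨by simp, ?_⟩
    exact AddSubmonoid.mul_mem_mul (by simpa [Jhat, AddSubmonoid.mem_comap] using J.zero_mem) hg

end
end

section
/- Every Lie ideal 𝔞 of L[s] is of the form 𝔞 = g·L[s] for some polynomial g ∈ ℂ[s]; that is, 𝔞 = (g) ⊗ L, where (g) is the principal ideal of ℂ[s] generated by g. -/
open scoped TensorProduct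

set_option maxHeartbeats 1000000

namespace Statement9Aux

attribute [local instance] LieRing.ofAssociativeRing

open UniversalEnvelopingAlgebra Polynomial

section UEA

variable {L : Type*} [LieRing L] [LieAlgebra ℂ L]

/-- Induction principle for the universal enveloping algebra. -/
theorem uea_induction {P : UniversalEnvelopingAlgebra ℂ L → Prop}
    (halg : ∀ c : ℂ, P (algebraMap ℂ (UniversalEnvelopingAlgebra ℂ L) c))
    (hι : ∀ x : L, P (UniversalEnvelopingAlgebra.ι ℂ x))
    (hmul : ∀ a b, P a → P b → P (a * b)) (hadd : ∀ a b, P a → P b → P (a + b)) :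
    ∀ u, P u := by
  intro u
  obtain ⟨t, rfl⟩ : ∃ t, UniversalEnvelopingAlgebra.mkAlgHom ℂ L t = u := Quot.exists_rep u
  induction t using TensorAlgebra.induction with
  | algebraMap c => rw [AlgHom.commutes]; exact halg c
  | ι x => exact hι x
  | mul a b ha hb => rw [map_mul]; exact hmul _ _ ha hb
  | add a b ha hb => rw [map_add]; exact hadd _ _ ha hb

variable {M : Type*} [AddCommGroup M] [Module ℂ M]

/-- A `U(L)`-module structure on `M` arising from a representation of `L` on `M`. -/
noncomputable def umod (ρ : L →ₗ⁅ℂ⁆ Module.End ℂ M) :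
    Module (UniversalEnvelopingAlgebra ℂ L) M :=
  Module.compHom M (UniversalEnvelopingAlgebra.lift ℂ ρ).toRingHom

variable (ρ : L →ₗ⁅ℂ⁆ Module.End ℂ M) [Module (UniversalEnvelopingAlgebra ℂ L) M]

theorem smul_alg
    (hs : ∀ (u : UniversalEnvelopingAlgebra ℂ L) (m : M),
      u • m = UniversalEnvelopingAlgebra.lift ℂ ρ u m)
    (c : ℂ) (m : M) : (algebraMap ℂ (UniversalEnvelopingAlgebra ℂ L) c) • m = c • m := by
  rw [hs, AlgHom.commutes]
  rfl

theorem smul_iota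
    (hs : ∀ (u : UniversalEnvelopingAlgebra ℂ L) (m : M),
      u • m = UniversalEnvelopingAlgebra.lift ℂ ρ u m)
    (x : L) (m : M) : (UniversalEnvelopingAlgebra.ι ℂ x) • m = ρ x m := by
  rw [hs, UniversalEnvelopingAlgebra.lift_ι_apply]

theorem tower
    (hs : ∀ (u : UniversalEnvelopingAlgebra ℂ L) (m : M),
      u • m = UniversalEnvelopingAlgebra.lift ℂ ρ u m) :
    IsScalarTower ℂ (UniversalEnvelopingAlgebra ℂ L) M := by
  constructor
  intro c u m
  rw [hs, hs, map_smul]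
  rfl

theorem stable
    (hs : ∀ (u : UniversalEnvelopingAlgebra ℂ L) (m : M),
      u • m = UniversalEnvelopingAlgebra.lift ℂ ρ u m)
    (p : Submodule ℂ M) (hp : ∀ x : L, ∀ m ∈ p, ρ x m ∈ p) :
    ∀ u : UniversalEnvelopingAlgebra ℂ L, ∀ m ∈ p, u • m ∈ p := by
  intro u
  induction u using uea_induction with
  | halg c => intro m hm; rw [smul_alg ρ hs]; exact p.smul_mem c hm
  | hι x => intro m hm; rw [smul_iota ρ hs]; exact hp x m hm
  | hmul a b ha hb => intro m hm; rw [mul_smul]; exact ha _ (hb _ hm)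
  | hadd a b ha hb => intro m hm; rw [add_smul]; exact p.add_mem (ha _ hm) (hb _ hm)

/-- A `ℂ`-subspace stable under the representation is a `U(L)`-submodule. -/
noncomputable def subU
    (hs : ∀ (u : UniversalEnvelopingAlgebra ℂ L) (m : M),
      u • m = UniversalEnvelopingAlgebra.lift ℂ ρ u m)
    (p : Submodule ℂ M) (hp : ∀ x : L, ∀ m ∈ p, ρ x m ∈ p) :
    Submodule (UniversalEnvelopingAlgebra ℂ L) M where
  carrier := p
  add_mem' := fun ha hb => p.add_mem ha hb
  zero_mem' := p.zero_mem
  smul_mem' := fun u {m} hm => stable ρ hs p hp u m hm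

theorem mem_subU (hs) (p : Submodule ℂ M) (hp) (m : M) :
    m ∈ subU ρ hs p hp ↔ m ∈ p := Iff.rfl

variable {N : Type*} [AddCommGroup N] [Module ℂ N]
  (ρN : L →ₗ⁅ℂ⁆ Module.End ℂ N) [Module (UniversalEnvelopingAlgebra ℂ L) N]

/-- An equivariant `ℂ`-linear map is `U(L)`-linear. -/
noncomputable def uLinear
    (hs : ∀ (u : UniversalEnvelopingAlgebra ℂ L) (m : M),
      u • m = UniversalEnvelopingAlgebra.lift ℂ ρ u m)
    (hsN : ∀ (u : UniversalEnvelopingAlgebra ℂ L) (n : N),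
      u • n = UniversalEnvelopingAlgebra.lift ℂ ρN u n)
    (φ : M →ₗ[ℂ] N) (hφ : ∀ (x : L) (m : M), φ (ρ x m) = ρN x (φ m)) :
    M →ₗ[UniversalEnvelopingAlgebra ℂ L] N where
  toFun := φ
  map_add' := φ.map_add
  map_smul' := by
    have key : ∀ u : UniversalEnvelopingAlgebra ℂ L, ∀ m : M, φ (u • m) = u • φ m := by
      intro u
      induction u using uea_induction with
      | halg c => intro m; rw [smul_alg ρ hs, smul_alg ρN hsN, map_smul]
      | hι x => intro m; rw [smul_iota ρ hs, smul_iota ρN hsN]; exact hφ x m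
      | hmul a b ha hb => intro m; rw [mul_smul, mul_smul, ha, hb]
      | hadd a b ha hb => intro m; rw [add_smul, add_smul, map_add, ha, hb]
    intro u m
    exact key u m

theorem uLinear_apply (hs) (hsN) (φ : M →ₗ[ℂ] N) (hφ) (m : M) :
    uLinear ρ ρN hs hsN φ hφ m = φ m := rfl

end UEA

section Main

variable {L : Type*} [LieRing L] [LieAlgebra ℂ L]

/-- The representation of `L` on `ℂ[s] ⊗ L` given by `x • m = ⁅1 ⊗ x, m⁆`. -/
noncomputable def rho (L : Type*) [LieRing L] [LieAlgebra ℂ L] :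
    L →ₗ⁅ℂ⁆ Module.End ℂ (Polynomial ℂ ⊗[ℂ] L) where
  toFun x :=
    ((LieModule.toEnd (Polynomial ℂ) (Polynomial ℂ ⊗[ℂ] L) (Polynomial ℂ ⊗[ℂ] L))
      ((1 : Polynomial ℂ) ⊗ₜ[ℂ] x)).restrictScalars ℂ
  map_add' x y := by
    refine LinearMap.ext fun m => ?_
    show (LieModule.toEnd (Polynomial ℂ) (Polynomial ℂ ⊗[ℂ] L) (Polynomial ℂ ⊗[ℂ] L))
        ((1 : Polynomial ℂ) ⊗ₜ[ℂ] (x + y)) m = _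
    rw [TensorProduct.tmul_add, map_add]
    simp only [LinearMap.add_apply, LinearMap.coe_restrictScalars]
  map_smul' c x := by
    refine LinearMap.ext fun m => ?_
    show (LieModule.toEnd (Polynomial ℂ) (Polynomial ℂ ⊗[ℂ] L) (Polynomial ℂ ⊗[ℂ] L))
        ((1 : Polynomial ℂ) ⊗ₜ[ℂ] (c • x)) m = _
    rw [show (1 : Polynomial ℂ) ⊗ₜ[ℂ] (c • x)
          = algebraMap ℂ (Polynomial ℂ) c • ((1 : Polynomial ℂ) ⊗ₜ[ℂ] x) by
        rw [TensorProduct.tmul_smul, algebraMap_smul], map_smul]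
    simp only [RingHom.id_apply, LinearMap.smul_apply, LinearMap.coe_restrictScalars]
    rw [algebraMap_smul]
  map_lie' := by
    intro x y
    refine LinearMap.ext fun m => ?_
    show (LieModule.toEnd (Polynomial ℂ) (Polynomial ℂ ⊗[ℂ] L) (Polynomial ℂ ⊗[ℂ] L))
        ((1 : Polynomial ℂ) ⊗ₜ[ℂ] ⁅x, y⁆) m = _
    rw [show (1 : Polynomial ℂ) ⊗ₜ[ℂ] ⁅x, y⁆
          = ⁅(1 : Polynomial ℂ) ⊗ₜ[ℂ] x, (1 : Polynomial ℂ) ⊗ₜ[ℂ] y⁆ by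
        rw [LieAlgebra.ExtendScalars.bracket_tmul, one_mul], LieHom.map_lie]
    simp only [Ring.lie_def, LinearMap.sub_apply, Module.End.mul_apply,
      LinearMap.coe_restrictScalars]

theorem rho_apply (x : L) (m : Polynomial ℂ ⊗[ℂ] L) :
    rho L x m = ⁅(1 : Polynomial ℂ) ⊗ₜ[ℂ] x, m⁆ := rfl

theorem rho_tmul (x : L) (f : Polynomial ℂ) (z : L) :
    rho L x (f ⊗ₜ[ℂ] z) = f ⊗ₜ[ℂ] ⁅x, z⁆ := by
  rw [rho_apply, LieAlgebra.ExtendScalars.bracket_tmul, one_mul]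

noncomputable local instance instUL : Module (UniversalEnvelopingAlgebra ℂ L) L :=
  umod (LieAlgebra.ad ℂ L)

noncomputable local instance instUM :
    Module (UniversalEnvelopingAlgebra ℂ L) (Polynomial ℂ ⊗[ℂ] L) :=
  umod (rho L)

theorem hsL : ∀ (u : UniversalEnvelopingAlgebra ℂ L) (m : L),
    u • m = UniversalEnvelopingAlgebra.lift ℂ (LieAlgebra.ad ℂ L) u m := fun _ _ => rfl

theorem hsM : ∀ (u : UniversalEnvelopingAlgebra ℂ L) (m : Polynomial ℂ ⊗[ℂ] L),
    u • m = UniversalEnvelopingAlgebra.lift ℂ (rho L) u m := fun _ _ => rfl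

local instance : IsScalarTower ℂ (UniversalEnvelopingAlgebra ℂ L) L :=
  tower (LieAlgebra.ad ℂ L) hsL

local instance : IsScalarTower ℂ (UniversalEnvelopingAlgebra ℂ L) (Polynomial ℂ ⊗[ℂ] L) :=
  tower (rho L) hsM

theorem nontrivL [LieAlgebra.IsSimple ℂ L] : Nontrivial L := by
  by_contra h
  rw [not_nontrivial_iff_subsingleton] at h
  exact LieAlgebra.IsSimple.non_abelian (R := ℂ) (L := L) ⟨fun x y => Subsingleton.elim _ _⟩

/-- `L` is a simple module over its universal enveloping algebra. -/
theorem simpleUL [LieAlgebra.IsSimple ℂ L] :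
    IsSimpleModule (UniversalEnvelopingAlgebra ℂ L) L := by
  haveI := nontrivL (L := L)
  haveI : Nontrivial (Submodule (UniversalEnvelopingAlgebra ℂ L) L) := by
    refine ⟨⊥, ⊤, fun h => ?_⟩
    obtain ⟨z, hz⟩ := exists_ne (0 : L)
    have hzmem : z ∈ (⊥ : Submodule (UniversalEnvelopingAlgebra ℂ L) L) := by
      rw [h]; exact Submodule.mem_top
    exact hz (Submodule.mem_bot _ |>.mp hzmem)
  refine { eq_bot_or_eq_top := ?_ }
  intro q
  let I : LieIdeal ℂ L :=
    { q.restrictScalars ℂ with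
      lie_mem := fun {x m} hm => by
        have h1 : ⁅x, m⁆ = (UniversalEnvelopingAlgebra.ι ℂ x) • m := by
          rw [smul_iota (LieAlgebra.ad ℂ L) hsL, LieAlgebra.ad_apply]
        show ⁅x, m⁆ ∈ q.restrictScalars ℂ
        rw [h1]
        exact q.smul_mem _ hm }
  have hmem : ∀ m : L, m ∈ q ↔ m ∈ I := fun m => Iff.rfl
  rcases LieAlgebra.IsSimple.eq_bot_or_eq_top I with h | h
  · left
    ext m
    rw [Submodule.mem_bot, hmem, h, LieSubmodule.mem_bot]
  · right
    ext m
    simp only [Submodule.mem_top, iff_true]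
    rw [hmem, h]
    exact LieSubmodule.mem_top m

/-- Schur's lemma for `U(L)`-endomorphisms of `L`. -/
theorem schur [LieAlgebra.IsSimple ℂ L] [FiniteDimensional ℂ L]
    (φ : L →ₗ[UniversalEnvelopingAlgebra ℂ L] L) : ∃ c : ℂ, ∀ z : L, φ z = c • z := by
  haveI := nontrivL (L := L)
  let φ' : Module.End ℂ L :=
    { toFun := φ
      map_add' := φ.map_add
      map_smul' := fun c z => by
        simp only [RingHom.id_apply]
        rw [← algebraMap_smul (UniversalEnvelopingAlgebra ℂ L) c z, map_smul, algebraMap_smul] }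
  have hφad : ∀ (x : L) (m : L), φ ⁅x, m⁆ = ⁅x, φ m⁆ := by
    intro x m
    have h1 : ⁅x, m⁆ = (UniversalEnvelopingAlgebra.ι ℂ x) • m := by
      rw [smul_iota (LieAlgebra.ad ℂ L) hsL, LieAlgebra.ad_apply]
    have h2 : ⁅x, φ m⁆ = (UniversalEnvelopingAlgebra.ι ℂ x) • φ m := by
      rw [smul_iota (LieAlgebra.ad ℂ L) hsL, LieAlgebra.ad_apply]
    rw [h1, h2, map_smul]
  obtain ⟨c, hc⟩ := Module.End.exists_eigenvalue φ'
  obtain ⟨v, hv⟩ := hc.exists_hasEigenvector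
  refine ⟨c, ?_⟩
  let K : Submodule ℂ L := LinearMap.ker (φ' - c • LinearMap.id)
  have hKmem : ∀ m : L, m ∈ K ↔ φ m = c • m := by
    intro m
    rw [LinearMap.mem_ker, LinearMap.sub_apply, LinearMap.smul_apply, LinearMap.id_apply,
      sub_eq_zero]
    rfl
  let I : LieIdeal ℂ L :=
    { K with
      lie_mem := fun {x m} hm => by
        have hm' : m ∈ K := hm
        show ⁅x, m⁆ ∈ K
        rw [hKmem] at hm' ⊢
        rw [hφad, hm', lie_smul] }
  have hImem : ∀ m : L, m ∈ I ↔ φ m = c • m := hKmem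
  rcases LieAlgebra.IsSimple.eq_bot_or_eq_top I with h | h
  · exfalso
    have hvI : v ∈ I := by
      rw [hImem]
      exact hv.apply_eq_smul
    rw [h, LieSubmodule.mem_bot] at hvI
    exact hv.right hvI
  · intro z
    have hz : z ∈ I := by rw [h]; exact LieSubmodule.mem_top z
    rw [hImem] at hz
    exact hz

/-- The `k`-th coefficient map `ℂ[s] ⊗ L → L`. -/
noncomputable def pic (k : ℕ) : Polynomial ℂ ⊗[ℂ] L →ₗ[ℂ] L :=
  (TensorProduct.lid ℂ L).toLinearMap ∘ₗ LinearMap.rTensor L (lcoeff ℂ k)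

theorem pic_tmul (k : ℕ) (f : Polynomial ℂ) (z : L) :
    pic k (f ⊗ₜ[ℂ] z) = coeff f k • z := by
  simp [pic]

theorem pic_equiv (k : ℕ) (x : L) (m : Polynomial ℂ ⊗[ℂ] L) :
    pic k (rho L x m) = LieAlgebra.ad ℂ L x (pic k m) := by
  induction m using TensorProduct.induction_on with
  | zero => simp
  | tmul f z => rw [rho_tmul, pic_tmul, pic_tmul, LieAlgebra.ad_apply, lie_smul]
  | add a b ha hb => rw [map_add, map_add, map_add, ha, hb, map_add]

/-- `pic k` as a `U(L)`-linear map. -/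
noncomputable def picU (k : ℕ) :
    (Polynomial ℂ ⊗[ℂ] L) →ₗ[UniversalEnvelopingAlgebra ℂ L] L :=
  uLinear (rho L) (LieAlgebra.ad ℂ L) hsM hsL (pic k) (pic_equiv k)

theorem exists_coords [FiniteDimensional ℂ L] (m : Polynomial ℂ ⊗[ℂ] L) :
    ∃ g : Fin (Module.finrank ℂ L) → Polynomial ℂ,
      m = ∑ i, g i ⊗ₜ[ℂ] (Module.finBasis ℂ L i) := by
  induction m using TensorProduct.induction_on with
  | zero => exact ⟨0, by simp⟩
  | tmul f z =>
    refine ⟨fun i => ((Module.finBasis ℂ L).repr z i) • f, ?_⟩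
    have hz : z = ∑ i, ((Module.finBasis ℂ L).repr z i) • Module.finBasis ℂ L i :=
      ((Module.finBasis ℂ L).sum_repr z).symm
    calc f ⊗ₜ[ℂ] z = f ⊗ₜ[ℂ] (∑ i, ((Module.finBasis ℂ L).repr z i) • Module.finBasis ℂ L i) :=
          by rw [← hz]
      _ = ∑ i, (((Module.finBasis ℂ L).repr z i) • f) ⊗ₜ[ℂ] Module.finBasis ℂ L i := by
          rw [TensorProduct.tmul_sum]
          refine Finset.sum_congr rfl fun i _ => ?_
          rw [TensorProduct.tmul_smul, TensorProduct.smul_tmul']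
  | add a b ha hb =>
    obtain ⟨g, hg⟩ := ha
    obtain ⟨g', hg'⟩ := hb
    refine ⟨g + g', ?_⟩
    rw [hg, hg', ← Finset.sum_add_distrib]
    refine Finset.sum_congr rfl fun i _ => ?_
    rw [Pi.add_apply, TensorProduct.add_tmul]

theorem pic_inj [FiniteDimensional ℂ L] {m : Polynomial ℂ ⊗[ℂ] L}
    (h : ∀ k, pic k m = 0) : m = 0 := by
  obtain ⟨g, rfl⟩ := exists_coords m
  have hg : ∀ i, g i = 0 := by
    intro i
    apply Polynomial.ext
    intro k
    have h2 := h k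
    rw [map_sum] at h2
    simp only [pic_tmul] at h2
    have h3 := Fintype.linearIndependent_iff.mp (Module.finBasis ℂ L).linearIndependent
      (fun i => coeff (g i) k) h2 i
    simpa using h3
  refine Finset.sum_eq_zero fun i _ => ?_
  rw [hg i, TensorProduct.zero_tmul]

/-- Pairing with a dual vector on the `L` side. -/
noncomputable def sig (ξ : Module.Dual ℂ L) : Polynomial ℂ ⊗[ℂ] L →ₗ[ℂ] Polynomial ℂ :=
  (TensorProduct.rid ℂ (Polynomial ℂ)).toLinearMap ∘ₗ LinearMap.lTensor (Polynomial ℂ) ξ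

theorem sig_tmul (ξ : Module.Dual ℂ L) (f : Polynomial ℂ) (z : L) :
    sig ξ (f ⊗ₜ[ℂ] z) = ξ z • f := by
  simp [sig]

theorem coeff_sig (ξ : Module.Dual ℂ L) (m : Polynomial ℂ ⊗[ℂ] L) (k : ℕ) :
    coeff (sig ξ m) k = ξ (pic k m) := by
  induction m using TensorProduct.induction_on with
  | zero => simp
  | tmul f z =>
    rw [sig_tmul, pic_tmul, map_smul, Polynomial.coeff_smul]
    simp [mul_comm]
  | add a b ha hb => rw [map_add, map_add, Polynomial.coeff_add, map_add, ha, hb]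

theorem mk_injective {f : Polynomial ℂ} (hf : f ≠ 0) :
    Function.Injective (TensorProduct.mk ℂ (Polynomial ℂ) L f) := by
  intro a b hab
  have key : ∀ z : L, pic f.natDegree (f ⊗ₜ[ℂ] z) = f.leadingCoeff • z := fun z => by
    rw [pic_tmul]; rfl
  have h2 : pic f.natDegree (f ⊗ₜ[ℂ] a) = pic f.natDegree (f ⊗ₜ[ℂ] b) := by
    exact congrArg (pic f.natDegree) hab
  rw [key, key] at h2
  exact smul_right_injective L (Polynomial.leadingCoeff_ne_zero.mpr hf) h2

theorem mk_equiv (f : Polynomial ℂ) (x : L) (z : L) :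
    TensorProduct.mk ℂ (Polynomial ℂ) L f (LieAlgebra.ad ℂ L x z) =
      rho L x (TensorProduct.mk ℂ (Polynomial ℂ) L f z) := by
  rw [TensorProduct.mk_apply, TensorProduct.mk_apply, rho_tmul, LieAlgebra.ad_apply]

/-- Multiplication `z ↦ f ⊗ z` as a `U(L)`-linear map. -/
noncomputable def mkU (f : Polynomial ℂ) :
    L →ₗ[UniversalEnvelopingAlgebra ℂ L] (Polynomial ℂ ⊗[ℂ] L) :=
  uLinear (LieAlgebra.ad ℂ L) (rho L) hsL hsM (TensorProduct.mk ℂ (Polynomial ℂ) L f)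
    (mk_equiv f)

/-- `ℂ[s] ⊗ L` is a semisimple `U(L)`-module. -/
theorem ssM [FiniteDimensional ℂ L] [LieAlgebra.IsSimple ℂ L] :
    IsSemisimpleModule (UniversalEnvelopingAlgebra ℂ L) (Polynomial ℂ ⊗[ℂ] L) := by
  haveI := simpleUL (L := L)
  apply IsSemisimpleModule.of_sSup_simples_eq_top
  rw [eq_top_iff]
  rintro m -
  induction m using TensorProduct.induction_on with
  | zero => exact Submodule.zero_mem _
  | tmul f z =>
    rcases eq_or_ne f 0 with rfl | hf
    · rw [TensorProduct.zero_tmul]; exact Submodule.zero_mem _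
    · have hinj : Function.Injective (mkU (L := L) f) := mk_injective hf
      have hsimple : IsSimpleModule (UniversalEnvelopingAlgebra ℂ L)
          (LinearMap.range (mkU (L := L) f)) :=
        IsSimpleModule.congr (LinearEquiv.ofInjective (mkU (L := L) f) hinj).symm
      have hle := le_sSup (show LinearMap.range (mkU (L := L) f) ∈
        {m : Submodule (UniversalEnvelopingAlgebra ℂ L) (Polynomial ℂ ⊗[ℂ] L) |
          IsSimpleModule (UniversalEnvelopingAlgebra ℂ L) m} from hsimple)
      exact hle ⟨z, rfl⟩
  | add a b ha hb => exact Submodule.add_mem _ ha hb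

/-- Every simple `U(L)`-submodule of `ℂ[s] ⊗ L` has the form `f ⊗ L`. -/
theorem simple_shape [FiniteDimensional ℂ L] [LieAlgebra.IsSimple ℂ L]
    (T : Submodule (UniversalEnvelopingAlgebra ℂ L) (Polynomial ℂ ⊗[ℂ] L))
    (hT : IsSimpleModule (UniversalEnvelopingAlgebra ℂ L) T) :
    ∃ f : Polynomial ℂ, (∀ z : L, f ⊗ₜ[ℂ] z ∈ T) ∧ ∀ m ∈ T, ∃ z : L, m = f ⊗ₜ[ℂ] z := by
  haveI := hT
  haveI := simpleUL (L := L)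
  haveI := nontrivL (L := L)
  haveI : Nontrivial T := IsSimpleModule.nontrivial (UniversalEnvelopingAlgebra ℂ L) T
  obtain ⟨t, ht0⟩ := exists_ne (0 : T)
  have hex : ∃ k, pic k (t : Polynomial ℂ ⊗[ℂ] L) ≠ 0 := by
    by_contra hcon
    push_neg at hcon
    exact ht0 (Subtype.ext (pic_inj hcon))
  obtain ⟨k, hk⟩ := hex
  let p : T →ₗ[UniversalEnvelopingAlgebra ℂ L] L := (picU k).comp T.subtype
  have hp : p ≠ 0 := by
    intro h0
    apply hk
    have : p t = 0 := by rw [h0]; rfl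
    exact this
  have hbij := LinearMap.bijective_of_ne_zero hp
  let e := LinearEquiv.ofBijective p hbij
  let η : L →ₗ[UniversalEnvelopingAlgebra ℂ L] (Polynomial ℂ ⊗[ℂ] L) :=
    T.subtype.comp e.symm.toLinearMap
  have hηT : ∀ z : L, η z ∈ T := fun z => (e.symm z).2
  have hc : ∀ j : ℕ, ∃ c : ℂ, ∀ z : L, pic j (η z) = c • z := by
    intro j
    obtain ⟨c, hc⟩ := schur ((picU j).comp η)
    exact ⟨c, fun z => hc z⟩
  choose c hcspec using hc
  obtain ⟨z₀, hz₀⟩ := exists_ne (0 : L)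
  obtain ⟨ξ, hξ⟩ : ∃ ξ : Module.Dual ℂ L, ξ z₀ = 1 := by
    have h1 : ¬∀ ξ : Module.Dual ℂ L, ξ z₀ = 0 := by
      rw [Module.forall_dual_apply_eq_zero_iff]
      exact hz₀
    push_neg at h1
    obtain ⟨ξ', hξ'⟩ := h1
    exact ⟨(ξ' z₀)⁻¹ • ξ', by simp [inv_mul_cancel₀ hξ']⟩
  set f := sig ξ (η z₀) with hfdef
  have hcoeff : ∀ j, coeff f j = c j := by
    intro j
    rw [hfdef, coeff_sig, hcspec j z₀, map_smul, hξ, smul_eq_mul, mul_one]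
  have hkey : ∀ z : L, η z = f ⊗ₜ[ℂ] z := by
    intro z
    have h0 : ∀ j, pic j (η z - f ⊗ₜ[ℂ] z) = 0 := by
      intro j
      rw [map_sub, pic_tmul, hcspec j z, hcoeff j, sub_self]
    exact sub_eq_zero.mp (pic_inj h0)
  refine ⟨f, fun z => hkey z ▸ hηT z, fun m hm => ⟨e ⟨m, hm⟩, ?_⟩⟩
  have hme : η (e ⟨m, hm⟩) = m := by
    show T.subtype (e.symm (e ⟨m, hm⟩)) = m
    rw [LinearEquiv.symm_apply_apply]
    rfl
  rw [← hkey (e ⟨m, hm⟩), hme]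

theorem perfect [LieAlgebra.IsSimple ℂ L] (z : L) :
    z ∈ Submodule.span ℂ {m : L | ∃ x y : L, ⁅x, y⁆ = m} := by
  rcases LieAlgebra.IsSimple.eq_bot_or_eq_top
      (R := ℂ) ⁅(⊤ : LieIdeal ℂ L), (⊤ : LieIdeal ℂ L)⁆ with h | h
  · exfalso
    apply LieAlgebra.IsSimple.non_abelian (R := ℂ) (L := L)
    constructor
    intro x y
    have hxy : ⁅x, y⁆ ∈ ⁅(⊤ : LieIdeal ℂ L), (⊤ : LieIdeal ℂ L)⁆ :=
      LieSubmodule.lie_mem_lie (LieSubmodule.mem_top x) (LieSubmodule.mem_top y)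
    rw [h, LieSubmodule.mem_bot] at hxy
    exact hxy
  · have hz : z ∈ ⁅(⊤ : LieIdeal ℂ L), (⊤ : LieIdeal ℂ L)⁆ := by
      rw [h]; exact LieSubmodule.mem_top z
    have hz' : z ∈ Submodule.span ℂ
        {m : L | ∃ x ∈ (⊤ : LieIdeal ℂ L), ∃ n ∈ (⊤ : LieIdeal ℂ L), ⁅x, n⁆ = m} := by
      rw [← LieSubmodule.lieIdeal_oper_eq_linear_span']
      exact hz
    refine Submodule.span_mono ?_ hz'
    rintro m ⟨x, -, y, -, hxy⟩
    exact ⟨x, y, hxy⟩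

/-- The master lemma: proved with the local `U(L)`-module instances in scope. -/
theorem master [FiniteDimensional ℂ L] [LieAlgebra.IsSimple ℂ L]
    (𝔞 : Submodule ℂ (Polynomial ℂ ⊗[ℂ] L))
    (h𝔞 : ∀ (x y : Polynomial ℂ ⊗[ℂ] L), y ∈ 𝔞 → ⁅x, y⁆ ∈ 𝔞) :
    ∃ g : Polynomial ℂ, ∀ x : Polynomial ℂ ⊗[ℂ] L,
      x ∈ 𝔞 ↔ ∃ y : Polynomial ℂ ⊗[ℂ] L, x = g • y := by
  classical
  -- the ideal of polynomials f with f ⊗ L ⊆ 𝔞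
  let J : Ideal (Polynomial ℂ) :=
    { carrier := {f | ∀ z : L, f ⊗ₜ[ℂ] z ∈ 𝔞}
      add_mem' := fun {f} {f'} hf hf' z => by
        rw [TensorProduct.add_tmul]; exact 𝔞.add_mem (hf z) (hf' z)
      zero_mem' := fun z => by rw [TensorProduct.zero_tmul]; exact 𝔞.zero_mem
      smul_mem' := fun h f hf => by
        intro z
        rw [smul_eq_mul]
        have hz := perfect (L := L) z
        refine Submodule.span_induction ?_ ?_ ?_ ?_ hz
        · rintro m ⟨x, y, rfl⟩
          have hb : ⁅h ⊗ₜ[ℂ] x, f ⊗ₜ[ℂ] y⁆ = (h * f) ⊗ₜ[ℂ] ⁅x, y⁆ := by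
            rw [LieAlgebra.ExtendScalars.bracket_tmul]
          rw [← hb]
          exact h𝔞 _ _ (hf y)
        · rw [TensorProduct.tmul_zero]; exact 𝔞.zero_mem
        · intro a b _ _ ha hb
          rw [TensorProduct.tmul_add]; exact 𝔞.add_mem ha hb
        · intro r a _ ha
          rw [TensorProduct.tmul_smul]; exact 𝔞.smul_mem r ha }
  have hJ : ∀ f : Polynomial ℂ, f ∈ J ↔ ∀ z : L, f ⊗ₜ[ℂ] z ∈ 𝔞 := fun _ => Iff.rfl
  -- J is principal
  obtain ⟨g, hg⟩ := (IsPrincipalIdealRing.principal J).principal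
  -- the span of J ⊗ L
  let NC : Submodule ℂ (Polynomial ℂ ⊗[ℂ] L) :=
    Submodule.span ℂ {m | ∃ f ∈ J, ∃ z : L, f ⊗ₜ[ℂ] z = m}
  have hNC : ∀ x : L, ∀ m ∈ NC, rho L x m ∈ NC := by
    intro x m hm
    refine Submodule.span_induction ?_ ?_ ?_ ?_ hm
    · rintro m ⟨f, hfJ, z, rfl⟩
      rw [rho_tmul]
      exact Submodule.subset_span ⟨f, hfJ, ⁅x, z⁆, rfl⟩
    · rw [map_zero]; exact Submodule.zero_mem _
    · intro a b _ _ ha hb; rw [map_add]; exact Submodule.add_mem _ ha hb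
    · intro r a _ ha; rw [map_smul]; exact Submodule.smul_mem _ r ha
  let NU : Submodule (UniversalEnvelopingAlgebra ℂ L) (Polynomial ℂ ⊗[ℂ] L) :=
    subU (rho L) hsM NC hNC
  -- 𝔞 as a U(L)-submodule
  have h𝔞' : ∀ x : L, ∀ m ∈ 𝔞, rho L x m ∈ 𝔞 := fun x m hm => h𝔞 _ _ hm
  let aU : Submodule (UniversalEnvelopingAlgebra ℂ L) (Polynomial ℂ ⊗[ℂ] L) :=
    subU (rho L) hsM 𝔞 h𝔞'
  -- hard inclusion : 𝔞 ⊆ NC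
  have key : ∀ a ∈ 𝔞, a ∈ NC := by
    haveI := ssM (L := L)
    have hle : aU ≤ NU := by
      conv_lhs => rw [← IsSemisimpleModule.sSup_simples_le aU]
      apply sSup_le
      rintro T ⟨hTsimple, hTle⟩
      intro m hm
      obtain ⟨f, hfT, hrep⟩ := simple_shape T hTsimple
      have hfJ : f ∈ J := by
        rw [hJ]
        intro z
        exact hTle (hfT z)
      obtain ⟨z, rfl⟩ := hrep m hm
      exact Submodule.subset_span ⟨f, hfJ, z, rfl⟩
    exact fun a ha => hle ha
  refine ⟨g, fun x => ⟨?_, ?_⟩⟩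
  · intro hx
    have hxNC := key x hx
    -- every element of NC is divisible by g
    refine Submodule.span_induction ?_ ?_ ?_ ?_ hxNC
    · rintro m ⟨f, hfJ, z, rfl⟩
      rw [hg, Ideal.submodule_span_eq, Ideal.mem_span_singleton'] at hfJ
      obtain ⟨h', rfl⟩ := hfJ
      refine ⟨h' ⊗ₜ[ℂ] z, ?_⟩
      rw [TensorProduct.smul_tmul', smul_eq_mul, mul_comm]
    · exact ⟨0, by rw [smul_zero]⟩
    · rintro a b _ _ ⟨y1, rfl⟩ ⟨y2, rfl⟩
      exact ⟨y1 + y2, by rw [smul_add]⟩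
    · rintro r a _ ⟨y, rfl⟩
      refine ⟨r • y, ?_⟩
      rw [← algebraMap_smul (Polynomial ℂ) r y, smul_smul, mul_comm, ← smul_smul,
        algebraMap_smul]
  · rintro ⟨y, rfl⟩
    have hgJ : g ∈ J := by
      rw [hg, Ideal.submodule_span_eq]
      exact Ideal.mem_span_singleton_self g
    induction y using TensorProduct.induction_on with
    | zero => rw [smul_zero]; exact 𝔞.zero_mem
    | tmul h' z =>
      rw [TensorProduct.smul_tmul']
      have hmul : g • h' ∈ J := by
        rw [smul_eq_mul]
        exact J.mul_mem_right h' hgJ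
      exact (hJ _).mp hmul z
    | add a b ha hb =>
      rw [smul_add]; exact 𝔞.add_mem ha hb

end Main

end Statement9Aux

/-- Let `L` be a finite-dimensional simple complex Lie algebra and
`L[s] = ℂ[s] ⊗[ℂ] L` its current algebra (with bracket `[f ⊗ x, g ⊗ y] = fg ⊗ [x,y]`).
Every Lie ideal of `L[s]` — i.e. every `ℂ`-subspace `𝔞` with `[L[s], 𝔞] ⊆ 𝔞` — is of the
form `𝔞 = g·L[s] = (g) ⊗ L` for some polynomial `g ∈ ℂ[s]`. -/
theorem statement9 (L : Type*) [LieRing L] [LieAlgebra ℂ L]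
    [FiniteDimensional ℂ L] [LieAlgebra.IsSimple ℂ L]
    (𝔞 : Submodule ℂ (Polynomial ℂ ⊗[ℂ] L))
    (h𝔞 : ∀ (x y : Polynomial ℂ ⊗[ℂ] L), y ∈ 𝔞 → ⁅x, y⁆ ∈ 𝔞) :
    ∃ g : Polynomial ℂ, ∀ x : Polynomial ℂ ⊗[ℂ] L,
      x ∈ 𝔞 ↔ ∃ y : Polynomial ℂ ⊗[ℂ] L, x = g • y := by
  exact Statement9Aux.master 𝔞 h𝔞
end

section
/- The element 𝒫_1' − 𝒫_2' is divisible by u_2 − v − ℏ in ℂ[[ℏ, u_1, u_2, v]]. -/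
noncomputable section

open MvPowerSeries

/-- The exponential `exp(a·ℏ + b·u₁ + c·u₂ + e·v) ∈ ℂ[[ℏ,u₁,u₂,v]]` of a linear form. -/
def expLin4 (a b c e : ℂ) : MvPowerSeries (Fin 4) ℂ :=
  fun d => (a ^ (d 0) / (d 0).factorial) * (b ^ (d 1) / (d 1).factorial) *
    (c ^ (d 2) / (d 2).factorial) * (e ^ (d 3) / (d 3).factorial)

/-! ### Auxiliary infrastructure -/

/-- A multivariate power series on `Fin 4` given by an explicit coefficient function. -/
def ser (f : ℕ → ℕ → ℕ → ℕ → ℂ) : MvPowerSeries (Fin 4) ℂ :=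
  fun d => f (d 0) (d 1) (d 2) (d 3)

lemma coeff_ser (f : ℕ → ℕ → ℕ → ℕ → ℂ) (d : Fin 4 →₀ ℕ) :
    coeff d (ser f) = f (d 0) (d 1) (d 2) (d 3) := rfl

lemma coeff_X_mul' (s : Fin 4) (f : MvPowerSeries (Fin 4) ℂ) (d : Fin 4 →₀ ℕ) :
    coeff d (X s * f) = if d s = 0 then 0 else coeff (d - Finsupp.single s 1) f := by
  rw [show (X s : MvPowerSeries (Fin 4) ℂ) = monomial (Finsupp.single s 1) 1 from rfl,
    coeff_monomial_mul]
  simp [Finsupp.single_le_iff, Nat.one_le_iff_ne_zero]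

lemma coeff_X_mul_ser0 (f : ℕ → ℕ → ℕ → ℕ → ℂ) (d : Fin 4 →₀ ℕ) :
    coeff d (X 0 * ser f) = if d 0 = 0 then 0 else f (d 0 - 1) (d 1) (d 2) (d 3) := by
  rw [coeff_X_mul']
  split_ifs with h
  · rfl
  · rw [coeff_ser]
    congr 1 <;> simp [Finsupp.tsub_apply, Finsupp.single_apply]

lemma coeff_X_mul_ser1 (f : ℕ → ℕ → ℕ → ℕ → ℂ) (d : Fin 4 →₀ ℕ) :
    coeff d (X 1 * ser f) = if d 1 = 0 then 0 else f (d 0) (d 1 - 1) (d 2) (d 3) := by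
  rw [coeff_X_mul']
  split_ifs with h
  · rfl
  · rw [coeff_ser]
    congr 1 <;> simp [Finsupp.tsub_apply, Finsupp.single_apply]

lemma coeff_X_mul_ser2 (f : ℕ → ℕ → ℕ → ℕ → ℂ) (d : Fin 4 →₀ ℕ) :
    coeff d (X 2 * ser f) = if d 2 = 0 then 0 else f (d 0) (d 1) (d 2 - 1) (d 3) := by
  rw [coeff_X_mul']
  split_ifs with h
  · rfl
  · rw [coeff_ser]
    congr 1 <;> simp [Finsupp.tsub_apply, Finsupp.single_apply]

lemma coeff_X_mul_ser3 (f : ℕ → ℕ → ℕ → ℕ → ℂ) (d : Fin 4 →₀ ℕ) :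
    coeff d (X 3 * ser f) = if d 3 = 0 then 0 else f (d 0) (d 1) (d 2) (d 3 - 1) := by
  rw [coeff_X_mul']
  split_ifs with h
  · rfl
  · rw [coeff_ser]
    congr 1 <;> simp [Finsupp.tsub_apply, Finsupp.single_apply]

/-! ### Multiplicativity of exponentials -/

lemma binom_conv (s t : ℂ) (n : ℕ) :
    ∑ p ∈ Finset.HasAntidiagonal.antidiagonal n, (s ^ p.1 / p.1.factorial) * (t ^ p.2 / p.2.factorial)
      = (s + t) ^ n / n.factorial := by
  rw [Finset.Nat.sum_antidiagonal_eq_sum_range_succ_mk, add_pow]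
  rw [Finset.sum_div]
  refine Finset.sum_congr rfl fun k hk => ?_
  have hkn : k ≤ n := Nat.lt_succ_iff.mp (Finset.mem_range.mp hk)
  have h : ((n.choose k : ℂ)) * (k.factorial * (n - k).factorial) = n.factorial := by
    push_cast [← Nat.choose_mul_factorial_mul_factorial hkn]; ring
  have h1 : (k.factorial : ℂ) ≠ 0 := Nat.cast_ne_zero.mpr k.factorial_ne_zero
  have h2 : ((n-k).factorial : ℂ) ≠ 0 := Nat.cast_ne_zero.mpr (n-k).factorial_ne_zero
  have h3 : (n.factorial : ℂ) ≠ 0 := Nat.cast_ne_zero.mpr n.factorial_ne_zero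
  field_simp
  linear_combination (-(s ^ k * t ^ (n - k))) * h

lemma expLin4_mul (a b c e a' b' c' e' : ℂ) :
    expLin4 a b c e * expLin4 a' b' c' e'
      = expLin4 (a + a') (b + b') (c + c') (e + e') := by
  ext d
  rw [coeff_mul]
  have h1 : ∑ p ∈ Finset.HasAntidiagonal.antidiagonal d,
        coeff p.1 (expLin4 a b c e) * coeff p.2 (expLin4 a' b' c' e')
      = ∑ q ∈ (((Finset.HasAntidiagonal.antidiagonal (d 0) ×ˢ Finset.HasAntidiagonal.antidiagonal (d 1)) ×ˢ
            Finset.HasAntidiagonal.antidiagonal (d 2)) ×ˢ Finset.HasAntidiagonal.antidiagonal (d 3)),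
          ((a ^ q.1.1.1.1 / q.1.1.1.1.factorial) * (a' ^ q.1.1.1.2 / q.1.1.1.2.factorial)) *
          ((b ^ q.1.1.2.1 / q.1.1.2.1.factorial) * (b' ^ q.1.1.2.2 / q.1.1.2.2.factorial)) *
          ((c ^ q.1.2.1 / q.1.2.1.factorial) * (c' ^ q.1.2.2 / q.1.2.2.factorial)) *
          ((e ^ q.2.1 / q.2.1.factorial) * (e' ^ q.2.2 / q.2.2.factorial)) := by
    refine Finset.sum_nbij'
      (fun p => ((((p.1 0, p.2 0), (p.1 1, p.2 1)), (p.1 2, p.2 2)), (p.1 3, p.2 3)))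
      (fun q => (Finsupp.equivFunOnFinite.symm ![q.1.1.1.1, q.1.1.2.1, q.1.2.1, q.2.1],
                 Finsupp.equivFunOnFinite.symm ![q.1.1.1.2, q.1.1.2.2, q.1.2.2, q.2.2]))
      ?_ ?_ ?_ ?_ ?_
    · intro p hp
      rw [Finset.HasAntidiagonal.mem_antidiagonal] at hp
      have h : ∀ k, p.1 k + p.2 k = d k := fun k => by
        rw [← Finsupp.add_apply, hp]
      simp only [Finset.mem_product, Finset.HasAntidiagonal.mem_antidiagonal]
      exact ⟨⟨⟨h 0, h 1⟩, h 2⟩, h 3⟩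
    · intro q hq
      simp only [Finset.mem_product, Finset.HasAntidiagonal.mem_antidiagonal] at hq
      rw [Finset.HasAntidiagonal.mem_antidiagonal]
      ext k
      fin_cases k <;>
        simp [Finsupp.coe_equivFunOnFinite_symm, hq.1.1.1, hq.1.1.2, hq.1.2, hq.2]
    · intro p hp
      refine Prod.ext ?_ ?_ <;> · ext k; fin_cases k <;> simp [Finsupp.coe_equivFunOnFinite_symm]
    · intro q hq
      simp [Finsupp.coe_equivFunOnFinite_symm]
    · intro p hp
      simp only [coeff_apply, expLin4]
      ring
  have h2 : coeff d (expLin4 (a + a') (b + b') (c + c') (e + e'))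
      = (∑ p ∈ Finset.HasAntidiagonal.antidiagonal (d 3), (e ^ p.1 / p.1.factorial) * (e' ^ p.2 / p.2.factorial))
      * (∑ p ∈ Finset.HasAntidiagonal.antidiagonal (d 2), (c ^ p.1 / p.1.factorial) * (c' ^ p.2 / p.2.factorial))
      * (∑ p ∈ Finset.HasAntidiagonal.antidiagonal (d 1), (b ^ p.1 / p.1.factorial) * (b' ^ p.2 / p.2.factorial))
      * (∑ p ∈ Finset.HasAntidiagonal.antidiagonal (d 0), (a ^ p.1 / p.1.factorial) * (a' ^ p.2 / p.2.factorial)) := by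
    rw [binom_conv, binom_conv, binom_conv, binom_conv]
    simp only [coeff_apply, expLin4]; ring
  rw [h1, h2]
  simp only [Finset.sum_product, Finset.sum_mul, Finset.mul_sum]
  refine Finset.sum_congr rfl fun p0 _ => ?_
  refine Finset.sum_congr rfl fun p1 _ => ?_
  refine Finset.sum_congr rfl fun p2 _ => ?_
  refine Finset.sum_congr rfl fun p3 _ => ?_
  ring

/-! ### The explicit auxiliary series -/

/-- `P(u₂, v+ℏ)` -/
def fT : ℕ → ℕ → ℕ → ℕ → ℂ :=
  fun i m a j => if m = 0 then ((i + j).choose i : ℂ) / (i + a + j + 1).factorial else 0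

/-- `P(u₁+ℏ, v+ℏ)` -/
def fPA : ℕ → ℕ → ℕ → ℕ → ℂ :=
  fun i m a j => if a = 0 then ((i + m + j + 1).choose i : ℂ) / (i + m + j + 1).factorial else 0

/-- `P(u₁, v+ℏ)` -/
def fPD : ℕ → ℕ → ℕ → ℕ → ℂ :=
  fun i m a j => if a = 0 then ((i + j).choose i : ℂ) / (i + m + j + 1).factorial else 0

/-- second divided difference `P₂(u₁+ℏ, u₂, v+ℏ)` -/
def fSA : ℕ → ℕ → ℕ → ℕ → ℂ :=
  fun i m a j => ((i + m + j + 1).choose i : ℂ) / (i + m + a + j + 2).factorial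

/-- second divided difference `P₂(u₁, u₂, v+ℏ)` -/
def fSD : ℕ → ℕ → ℕ → ℕ → ℂ :=
  fun i m a j => ((i + j).choose i : ℂ) / (i + m + a + j + 2).factorial

lemma fact_nz (n : ℕ) : ((n.factorial : ℂ)) ≠ 0 := Nat.cast_ne_zero.mpr n.factorial_ne_zero

lemma add_choose_c (s t : ℕ) :
    ((s + t).choose s : ℂ) * s.factorial * t.factorial = (s + t).factorial := by
  have h := Nat.add_choose_mul_factorial_mul_factorial t s
  rw [add_comm t s] at h
  push_cast [← h]; ring

/-! ### The scalar coefficient identities -/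

lemma keyT (i m a j : ℕ) :
    (if a = 0 then 0 else fT i m (a - 1) j) - (if j = 0 then 0 else fT i m a (j - 1))
      - (if i = 0 then 0 else fT (i - 1) m a j)
    = ((0:ℂ) ^ i / i.factorial) * ((0:ℂ) ^ m / m.factorial) * ((1:ℂ) ^ a / a.factorial)
        * ((0:ℂ) ^ j / j.factorial)
      - ((1:ℂ) ^ i / i.factorial) * ((0:ℂ) ^ m / m.factorial) * ((0:ℂ) ^ a / a.factorial)
        * ((1:ℂ) ^ j / j.factorial) := by
  rcases m with _ | m
  · rcases a with _ | a <;> rcases j with _ | t <;> rcases i with _ | s <;>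
      simp [fT, Nat.choose_succ_succ'] <;> push_cast <;> ring_nf
    · -- a = 0, j = t+1, i = s+1
      have hc := add_choose_c (1 + s) (1 + t)
      rw [show 1 + s + (1 + t) = 2 + s + t by omega] at hc
      have e : (2 + s + t).choose (1 + s)
          = (1 + s + t).choose s + (1 + s + t).choose (1 + s) := by
        rw [show 2 + s + t = (1 + s + t) + 1 by omega, show 1 + s = s + 1 by omega,
          Nat.choose_succ_succ']
      have h1 := fact_nz (1 + s)
      have h2 := fact_nz (1 + t)
      have h3 := fact_nz (2 + s + t)
      field_simp
      push_cast [e] at hc ⊢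
      linear_combination (-1 : ℂ) * hc
    · -- a = a+1, j = t+1, i = s+1
      have e : (2 + s + t).choose (1 + s)
          = (1 + s + t).choose s + (1 + s + t).choose (1 + s) := by
        rw [show 2 + s + t = (1 + s + t) + 1 by omega, show 1 + s = s + 1 by omega,
          Nat.choose_succ_succ']
      push_cast [e]
      ring
  · simp [fT]

lemma keyPA (i m a j : ℕ) :
    (if m = 0 then 0 else fPA i (m - 1) a j) - (if j = 0 then 0 else fPA i m a (j - 1))
    = ((1:ℂ) ^ i / i.factorial) * ((1:ℂ) ^ m / m.factorial) * ((0:ℂ) ^ a / a.factorial)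
        * ((0:ℂ) ^ j / j.factorial)
      - ((1:ℂ) ^ i / i.factorial) * ((0:ℂ) ^ m / m.factorial) * ((0:ℂ) ^ a / a.factorial)
        * ((1:ℂ) ^ j / j.factorial) := by
  rcases a with _ | a
  · rcases m with _ | u <;> rcases j with _ | t <;>
      simp [fPA] <;> push_cast <;> ring_nf
    · -- m = 0, j = t+1
      have hc := add_choose_c i (1 + t)
      rw [show i + (1 + t) = 1 + i + t by omega] at hc
      have h1 := fact_nz i
      have h2 := fact_nz (1 + t)
      have h3 := fact_nz (1 + i + t)
      field_simp
      linear_combination hc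
    · -- m = u+1, j = 0
      have hc := add_choose_c i (1 + u)
      rw [show i + (1 + u) = 1 + i + u by omega] at hc
      have h1 := fact_nz i
      have h2 := fact_nz (1 + u)
      have h3 := fact_nz (1 + i + u)
      field_simp
      linear_combination hc
  · simp [fPA]

lemma keyPD (i m a j : ℕ) :
    (if m = 0 then 0 else fPD i (m - 1) a j) - (if j = 0 then 0 else fPD i m a (j - 1))
      - (if i = 0 then 0 else fPD (i - 1) m a j)
    = ((0:ℂ) ^ i / i.factorial) * ((1:ℂ) ^ m / m.factorial) * ((0:ℂ) ^ a / a.factorial)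
        * ((0:ℂ) ^ j / j.factorial)
      - ((1:ℂ) ^ i / i.factorial) * ((0:ℂ) ^ m / m.factorial) * ((0:ℂ) ^ a / a.factorial)
        * ((1:ℂ) ^ j / j.factorial) := by
  rcases a with _ | a
  · rcases m with _ | u <;> rcases j with _ | t <;> rcases i with _ | s <;>
      simp [fPD, Nat.choose_succ_succ'] <;> push_cast <;> ring_nf
    · -- m = 0, j = t+1, i = s+1
      have hc := add_choose_c (1 + s) (1 + t)
      rw [show 1 + s + (1 + t) = 2 + s + t by omega] at hc
      have e : (2 + s + t).choose (1 + s)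
          = (1 + s + t).choose s + (1 + s + t).choose (1 + s) := by
        rw [show 2 + s + t = (1 + s + t) + 1 by omega, show 1 + s = s + 1 by omega,
          Nat.choose_succ_succ']
      have h1 := fact_nz (1 + s)
      have h2 := fact_nz (1 + t)
      have h3 := fact_nz (2 + s + t)
      field_simp
      push_cast [e] at hc ⊢
      linear_combination (-1 : ℂ) * hc
    · -- m = u+1, j = t+1, i = s+1
      have e : (2 + s + t).choose (1 + s)
          = (1 + s + t).choose s + (1 + s + t).choose (1 + s) := by
        rw [show 2 + s + t = (1 + s + t) + 1 by omega, show 1 + s = s + 1 by omega,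
          Nat.choose_succ_succ']
      push_cast [e]
      ring
  · simp [fPD]

lemma keySA (i m a j : ℕ) :
    (if m = 0 then 0 else fSA i (m - 1) a j) + (if i = 0 then 0 else fSA (i - 1) m a j)
      - (if a = 0 then 0 else fSA i m (a - 1) j)
    = fPA i m a j - fT i m a j := by
  rcases m with _ | u <;> rcases i with _ | s <;> rcases a with _ | c <;>
    simp [fSA, fPA, fT, Nat.choose_succ_succ'] <;> push_cast <;> ring_nf
  · -- m = u+1, i = s+1, a = 0
    have e : (2 + s + u + j).choose (1 + s)
        = (1 + s + u + j).choose s + (1 + s + u + j).choose (1 + s) := by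
      rw [show 2 + s + u + j = (1 + s + u + j) + 1 by omega, show 1 + s = s + 1 by omega,
        Nat.choose_succ_succ']
    push_cast [e]
    ring
  · -- m = u+1, i = s+1, a = c+1
    have e : (2 + s + u + j).choose (1 + s)
        = (1 + s + u + j).choose s + (1 + s + u + j).choose (1 + s) := by
      rw [show 2 + s + u + j = (1 + s + u + j) + 1 by omega, show 1 + s = s + 1 by omega,
        Nat.choose_succ_succ']
    push_cast [e]
    ring

lemma keySD (i m a j : ℕ) :
    (if m = 0 then 0 else fSD i (m - 1) a j) - (if a = 0 then 0 else fSD i m (a - 1) j)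
      = fPD i m a j - fT i m a j := by
  rcases m with _ | m <;> rcases a with _ | a <;>
    simp [fSD, fPD, fT] <;> ring_nf

/-! ### The series-level identities -/

lemma ser_hT : (X 2 - X 3 - X 0) * ser fT = expLin4 0 0 1 0 - expLin4 1 0 0 1 := by
  ext d
  rw [sub_mul, sub_mul, map_sub, map_sub, coeff_X_mul_ser2, coeff_X_mul_ser3, coeff_X_mul_ser0,
    map_sub]
  exact keyT (d 0) (d 1) (d 2) (d 3)

lemma ser_hPA : (X 1 - X 3) * ser fPA = expLin4 1 1 0 0 - expLin4 1 0 0 1 := by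
  ext d
  rw [sub_mul, map_sub, coeff_X_mul_ser1, coeff_X_mul_ser3, map_sub]
  exact keyPA (d 0) (d 1) (d 2) (d 3)

lemma ser_hPD : (X 1 - X 3 - X 0) * ser fPD = expLin4 0 1 0 0 - expLin4 1 0 0 1 := by
  ext d
  rw [sub_mul, sub_mul, map_sub, map_sub, coeff_X_mul_ser1, coeff_X_mul_ser3, coeff_X_mul_ser0,
    map_sub]
  exact keyPD (d 0) (d 1) (d 2) (d 3)

lemma ser_hSA : (X 1 + X 0 - X 2) * ser fSA = ser fPA - ser fT := by
  ext d
  rw [sub_mul, add_mul, map_sub, map_add, coeff_X_mul_ser1, coeff_X_mul_ser0, coeff_X_mul_ser2,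
    map_sub, coeff_ser, coeff_ser]
  exact keySA (d 0) (d 1) (d 2) (d 3)

lemma ser_hSD : (X 1 - X 2) * ser fSD = ser fPD - ser fT := by
  ext d
  rw [sub_mul, map_sub, coeff_X_mul_ser1, coeff_X_mul_ser2, map_sub, coeff_ser, coeff_ser]
  exact keySD (d 0) (d 1) (d 2) (d 3)

/-! ### Nonvanishing of linear forms -/

lemma coeffX_single (k : Fin 4) :
    coeff (Finsupp.single 1 1) (X k : MvPowerSeries (Fin 4) ℂ) = if k = 1 then 1 else 0 := by
  rw [coeff_X]
  rcases eq_or_ne k 1 with h | h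
  · subst h; simp
  · rw [if_neg, if_neg h]
    intro hc
    exact h (by simpa using (Finsupp.single_left_inj (one_ne_zero)).mp hc.symm)

lemma nzA1 : (X 1 + X 0 - X 2 : MvPowerSeries (Fin 4) ℂ) ≠ 0 := by
  intro h
  have := congrArg (coeff (Finsupp.single 1 1)) h
  simp [map_sub, map_add, coeffX_single] at this

lemma nzA2 : (X 1 - X 3 - X 0 : MvPowerSeries (Fin 4) ℂ) ≠ 0 := by
  intro h
  have := congrArg (coeff (Finsupp.single 1 1)) h
  simp [map_sub, coeffX_single] at this

lemma nzB1 : (X 1 - X 2 : MvPowerSeries (Fin 4) ℂ) ≠ 0 := by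
  intro h
  have := congrArg (coeff (Finsupp.single 1 1)) h
  simp [map_sub, coeffX_single] at this

lemma nzB2 : (X 1 - X 3 : MvPowerSeries (Fin 4) ℂ) ≠ 0 := by
  intro h
  have := congrArg (coeff (Finsupp.single 1 1)) h
  simp [map_sub, coeffX_single] at this

/-! ### The main theorem -/

/-- In `ℂ[[ℏ, u₁, u₂, v]]` (variables `ℏ = X 0`, `u₁ = X 1`,
`u₂ = X 2`, `v = X 3`) the element `𝒫₁' − 𝒫₂'` is divisible by `u₂ − v − ℏ`, where
`𝒫₁' = P(u₁+ℏ, u₂)·P(u₁−ℏ/2, v+ℏ/2)·P(u₂, v)`,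
`𝒫₂' = e^{ℏ/2}·P(u₁, u₂)·P(u₁, v)·P(u₂, v)`
and `(x − y)·P(x, y) = e^x − e^y`.  Each substituted copy of `P` is pinned down by its
unique algebraic characterisation below. -/
theorem statement14
    (Pa Pb Pc Pd Pe : MvPowerSeries (Fin 4) ℂ)
    -- Pa = P(u₁+ℏ, u₂)
    (hPa : (X 1 + X 0 - X 2) * Pa = expLin4 1 1 0 0 - expLin4 0 0 1 0)
    -- Pb = P(u₁−ℏ/2, v+ℏ/2)
    (hPb : (X 1 - X 3 - X 0) * Pb = expLin4 (-(1/2)) 1 0 0 - expLin4 (1/2) 0 0 1)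
    -- Pc = P(u₂, v)
    (hPc : (X 2 - X 3) * Pc = expLin4 0 0 1 0 - expLin4 0 0 0 1)
    -- Pd = P(u₁, u₂)
    (hPd : (X 1 - X 2) * Pd = expLin4 0 1 0 0 - expLin4 0 0 1 0)
    -- Pe = P(u₁, v)
    (hPe : (X 1 - X 3) * Pe = expLin4 0 1 0 0 - expLin4 0 0 0 1) :
    ∃ Q : MvPowerSeries (Fin 4) ℂ,
      Pa * Pb * Pc - expLin4 (1/2) 0 0 0 * Pd * Pe * Pc = (X 2 - X 3 - X 0) * Q := by
  have hPa2 : Pa = ser fPA + (X 2 - X 3 - X 0) * ser fSA := by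
    refine mul_left_cancel₀ nzA1 ?_
    linear_combination hPa - (X 2 - X 3 - X 0) * ser_hSA - ser_hPA + ser_hT
  have hPd2 : Pd = ser fPD + (X 2 - X 3 - X 0) * ser fSD := by
    refine mul_left_cancel₀ nzB1 ?_
    linear_combination hPd - (X 2 - X 3 - X 0) * ser_hSD - ser_hPD + ser_hT
  have hexp : (expLin4 1 1 0 0 - expLin4 1 0 0 1)
        * (expLin4 (-(1/2)) 1 0 0 - expLin4 (1/2) 0 0 1)
      = expLin4 (1/2) 0 0 0 * ((expLin4 0 1 0 0 - expLin4 1 0 0 1)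
        * (expLin4 0 1 0 0 - expLin4 0 0 0 1)) := by
    simp only [sub_mul, mul_sub, expLin4_mul]
    norm_num
    ring_nf
  have hkey : ser fPA * Pb = expLin4 (1/2) 0 0 0 * (ser fPD * Pe) := by
    refine mul_left_cancel₀ (mul_ne_zero nzB2 nzA2) ?_
    linear_combination ((X 1 - X 3 - X 0) * Pb) * ser_hPA
      + (expLin4 1 1 0 0 - expLin4 1 0 0 1) * hPb
      - expLin4 (1/2) 0 0 0 * ((X 1 - X 3) * Pe) * ser_hPD
      - expLin4 (1/2) 0 0 0 * (expLin4 0 1 0 0 - expLin4 1 0 0 1) * hPe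
      + hexp
  refine ⟨(ser fSA * Pb - expLin4 (1/2) 0 0 0 * (ser fSD * Pe)) * Pc, ?_⟩
  rw [hPa2, hPd2]
  linear_combination Pc * hkey

end
end
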